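/- Let 𝔽 be an algebraic closure of the field 𝔽₂ with two elements, W(𝔽) its ring of Witt vectors, and B(𝔽) the field of fractions of W(𝔽). Let F be a finite field extension of ℚ₂ such that there exists a ℚ₂-algebra homomorphism F → B(𝔽). Then F is unramified over ℚ₂: the ramification index of the integral closure O_F of ℤ₂ in F over ℤ₂ equals 1, i.e., 2 generates the maximal ideal of the discrete valuation ring O_F. -/

import Mathlib

noncomputable section

/-- `𝔽`, an algebraic closure of the field `𝔽₂` with two elements. -/
abbrev Fbar : Type := AlgebraicClosure (ZMod 2)

/-- `B(𝔽)`, the field of fractions of the ring of Witt vectors `W(𝔽)`. -/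
abbrev BF : Type := FractionRing (WittVector 2 Fbar)

/-- The canonical ring homomorphism `ℤ₂ → B(𝔽)`, obtained from the canonical
identification `ℤ₂ ≅ W(𝔽₂)`, functoriality of Witt vectors along `𝔽₂ → 𝔽`, and the
inclusion `W(𝔽) → B(𝔽)`. -/
def canonicalZ2toBF : ℤ_[2] →+* BF :=
  (algebraMap (WittVector 2 Fbar) BF).comp
    ((WittVector.map (algebraMap (ZMod 2) Fbar)).comp
      (WittVector.equiv (p := 2)).symm.toRingHom)

namespace Unram
open IsDedekindDomain Multiplicative WithZeroMulInt

local notation "W" => WittVector 2 Fbar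

instance : IsDiscreteValuationRing W := WittVector.isDiscreteValuationRing

def phi : ℤ_[2] →+* W :=
  (WittVector.map (algebraMap (ZMod 2) Fbar)).comp (WittVector.equiv (p := 2)).symm.toRingHom

lemma canonical_eq : canonicalZ2toBF = (algebraMap W BF).comp phi := rfl

lemma two_ne_zero_W : (2 : W) ≠ 0 := by
  have := WittVector.p_nonzero 2 Fbar; simpa using this

lemma irr2 : Irreducible (2 : W) := by
  have := WittVector.irreducible 2 (k := Fbar); simpa using this

lemma prime2W : Prime (2 : W) := irr2.prime

lemma maxIdeal_eq : IsLocalRing.maximalIdeal W = Ideal.span {(2 : W)} :=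
  irr2.maximalIdeal_eq

def vW : HeightOneSpectrum W where
  asIdeal := IsLocalRing.maximalIdeal W
  isPrime := Ideal.IsMaximal.isPrime inferInstance
  ne_bot := by
    rw [maxIdeal_eq]
    simpa [Ideal.span_singleton_eq_bot] using two_ne_zero_W

lemma vW_int_two : vW.intValuation (2 : W) = ofAdd (-1 : ℤ) :=
  vW.intValuation_singleton two_ne_zero_W maxIdeal_eq

instance : Valued BF (WithZero (Multiplicative ℤ)) := vW.adicValued

lemma valued_eq (x : BF) : Valued.v x = vW.valuation BF x := rfl

instance : Valuation.RankOne (Valued.v : Valuation BF (WithZero (Multiplicative ℤ))) where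
  hom' := (toNNReal (by norm_num : (2 : NNReal) ≠ 0)).comp MonoidWithZeroHom.ValueGroup₀.embedding
  strictMono' := (toNNReal_strictMono (by norm_num)).comp MonoidWithZeroHom.ValueGroup₀.embedding_strictMono
  exists_val_nontrivial := by
    refine ⟨algebraMap W BF (2 : W), ?_, ?_⟩
    · rw [valued_eq, vW.valuation_of_algebraMap, vW_int_two]
      exact WithZero.coe_ne_zero
    · rw [valued_eq, vW.valuation_of_algebraMap, vW_int_two]
      intro h
      have h2 := congrArg Multiplicative.toAdd (WithZero.coe_inj.mp h)
      exact absurd h2 (by decide)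

instance : NormedField BF := Valued.toNormedField BF (WithZero (Multiplicative ℤ))

lemma norm_alg_le_one (a : W) : ‖algebraMap W BF a‖ ≤ 1 := by
  rw [Valued.toNormedField.norm_le_one_iff, valued_eq, vW.valuation_of_algebraMap]
  exact vW.intValuation_le_one a

lemma norm_alg_two : ‖algebraMap W BF (2 : W)‖ = 2⁻¹ := by
  have : Valued.v (algebraMap W BF (2 : W)) = (ofAdd (-1 : ℤ) : Multiplicative ℤ) := by
    rw [valued_eq, vW.valuation_of_algebraMap, vW_int_two]
  show ((toNNReal (by norm_num : (2:NNReal) ≠ 0) (MonoidWithZeroHom.ValueGroup₀.embedding (Valued.v.restrict (algebraMap W BF (2:W)))) : NNReal) : ℝ) = 2⁻¹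
  rw [Valuation.embedding_restrict, this]
  show ((toNNReal (by norm_num : (2:NNReal) ≠ 0) (ofAdd (-1:ℤ) : Multiplicative ℤ) : NNReal) : ℝ) = 2⁻¹
  rw [toNNReal_neg_apply _ (WithZero.coe_ne_zero)]
  push_cast
  rw [WithZero.unzero_coe]
  simp

lemma norm_alg_unit (u : Wˣ) : ‖algebraMap W BF (u : W)‖ = 1 := by
  have h1 : ‖algebraMap W BF (u : W)‖ * ‖algebraMap W BF ((u⁻¹ : Wˣ) : W)‖ = 1 := by
    rw [← norm_mul, ← map_mul]
    simp
  have ha := norm_alg_le_one (u : W)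
  have hb := norm_alg_le_one ((u⁻¹ : Wˣ) : W)
  nlinarith [norm_nonneg (algebraMap W BF (u : W)),
    norm_nonneg (algebraMap W BF ((u⁻¹ : Wˣ) : W))]

lemma norm_isUnit {w : W} (hw : IsUnit w) : ‖algebraMap W BF w‖ = 1 := by
  obtain ⟨u, rfl⟩ := hw
  exact norm_alg_unit u

lemma phi_two : phi ((2 : ℕ) : ℤ_[2]) = (2 : W) := by
  rw [map_natCast]
  norm_num

lemma norm_phi (a : ℤ_[2]) : ‖algebraMap W BF (phi a)‖ = ‖a‖ := by
  by_cases ha : a = 0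
  · simp [ha]
  · set n := a.valuation with hn
    have hspec : a = (PadicInt.unitCoeff ha : ℤ_[2]) * ((2 : ℕ) : ℤ_[2]) ^ n :=
      PadicInt.unitCoeff_spec ha
    calc ‖algebraMap W BF (phi a)‖
        = ‖algebraMap W BF (phi ((PadicInt.unitCoeff ha : ℤ_[2]) * ((2:ℕ) : ℤ_[2]) ^ n))‖ := by
          rw [← hspec]
      _ = 1 * (2⁻¹ : ℝ) ^ n := by
          rw [map_mul, map_pow, phi_two, map_mul, map_pow, norm_mul, norm_pow,
            norm_alg_two, norm_isUnit ((PadicInt.unitCoeff ha).isUnit.map phi)]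
      _ = ‖a‖ := by
          rw [PadicInt.norm_eq_zpow_neg_valuation ha]
          simp [n]

lemma norm_psi {F : Type} [Field F] [Algebra ℚ_[2] F] [Algebra ℤ_[2] F]
    [IsScalarTower ℤ_[2] ℚ_[2] F]
    (f : F →+* BF) (hf : ∀ x : ℤ_[2], f (algebraMap ℤ_[2] F x) = canonicalZ2toBF x)
    (c : ℚ_[2]) : ‖f (algebraMap ℚ_[2] F c)‖ = ‖c‖ := by
  obtain ⟨m, hm⟩ : ∃ m : ℕ, ‖c‖ ≤ 2 ^ m :=
    ⟨(pow_unbounded_of_one_lt ‖c‖ (by norm_num : (1:ℝ) < 2)).choose,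
      (pow_unbounded_of_one_lt ‖c‖ (by norm_num : (1:ℝ) < 2)).choose_spec.le⟩
  have hnorm2 : ‖((2:ℕ) : ℚ_[2])‖ = 2⁻¹ := by
    rw [Padic.norm_p]
    norm_num
  have hmem : ‖((2:ℕ) : ℚ_[2]) ^ m * c‖ ≤ 1 := by
    rw [norm_mul, norm_pow, hnorm2]
    calc (2⁻¹ : ℝ) ^ m * ‖c‖ ≤ 2⁻¹ ^ m * 2 ^ m := by
          apply mul_le_mul_of_nonneg_left hm (by positivity)
      _ = 1 := by rw [← mul_pow]; norm_num
  set a : ℤ_[2] := ⟨((2:ℕ) : ℚ_[2]) ^ m * c, hmem⟩ with hadef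
  have hcoe : algebraMap ℤ_[2] ℚ_[2] a = ((2:ℕ) : ℚ_[2]) ^ m * c := rfl
  have happ : f (algebraMap ℚ_[2] F (algebraMap ℤ_[2] ℚ_[2] a)) = algebraMap W BF (phi a) := by
    rw [← IsScalarTower.algebraMap_apply ℤ_[2] ℚ_[2] F, hf]
    rfl
  have hfa : ‖a‖ = ‖((2:ℕ) : ℚ_[2]) ^ m * c‖ := rfl
  have hf2 : f (algebraMap ℚ_[2] F ((2:ℕ) : ℚ_[2])) = algebraMap W BF (2 : W) := by
    rw [show (2 : W) = ((2:ℕ) : W) by norm_num, map_natCast, map_natCast, map_natCast]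
  have expand : f (algebraMap ℚ_[2] F (algebraMap ℤ_[2] ℚ_[2] a)) =
      (algebraMap W BF (2 : W)) ^ m * f (algebraMap ℚ_[2] F c) := by
    rw [hcoe, map_mul, map_mul, map_pow, map_pow, hf2]
  have key : (‖algebraMap W BF (2 : W)‖) ^ m * ‖f (algebraMap ℚ_[2] F c)‖
      = ‖((2:ℕ) : ℚ_[2])‖ ^ m * ‖c‖ := by
    rw [← norm_pow, ← norm_mul, ← expand, happ, norm_phi, hfa, norm_mul, norm_pow]
  rw [norm_alg_two, hnorm2] at key
  have hpos : ((2:ℝ)⁻¹) ^ m ≠ 0 := by positivity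
  exact mul_left_cancel₀ hpos key

theorem integral_of_image_in_W (F : Type) [Field F] [Algebra ℚ_[2] F]
    [FiniteDimensional ℚ_[2] F] [Algebra ℤ_[2] F] [IsScalarTower ℤ_[2] ℚ_[2] F]
    (f : F →+* BF) (hf : ∀ x : ℤ_[2], f (algebraMap ℤ_[2] F x) = canonicalZ2toBF x)
    (t : F) (a : W) (ht : f t = algebraMap W BF a) : IsIntegral ℤ_[2] t := by
  letI : NormedField F := NormedField.induced F BF f f.injective
  have hnorm : ∀ x : F, ‖x‖ = ‖f x‖ := fun x => rfl
  letI : NormedSpace ℚ_[2] F := ⟨fun c x => by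
    rw [hnorm, Algebra.smul_def, map_mul, norm_mul, norm_psi f hf c, ← hnorm]⟩
  -- the adjoin of t lies in the unit ball
  set S := Algebra.adjoin ℤ_[2] ({t} : Set F) with hSdef
  have hball : ∀ s ∈ S, ‖s‖ ≤ 1 := by
    intro s hs
    induction hs using Algebra.adjoin_induction with
    | mem x hx =>
      rw [Set.mem_singleton_iff] at hx
      subst hx
      rw [hnorm, ht]
      exact norm_alg_le_one a
    | algebraMap r =>
      rw [hnorm, hf]
      show ‖algebraMap W BF (phi r)‖ ≤ 1
      rw [norm_phi]
      exact PadicInt.norm_le_one r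
    | add x y hx hy ihx ihy =>
      rw [hnorm, map_add]
      exact le_trans (IsUltrametricDist.norm_add_le_max (f x) (f y)) (max_le ihx ihy)
    | mul x y hx hy ihx ihy =>
      rw [hnorm, map_mul, norm_mul, ← hnorm, ← hnorm]
      exact mul_le_one₀ ihx (norm_nonneg y) ihy
  -- coordinates with respect to a basis are bounded on the unit ball
  let b := Module.finBasis ℚ_[2] F
  have hcoordbound : ∀ i, ∃ k : ℕ, ∀ x : F, ‖x‖ ≤ 1 → ‖b.repr x i‖ ≤ 2 ^ k := by
    intro i
    let L := LinearMap.toContinuousLinearMap (b.coord i)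
    obtain ⟨k, hk⟩ := pow_unbounded_of_one_lt ‖L‖ (by norm_num : (1:ℝ) < 2)
    refine ⟨k, fun x hx => ?_⟩
    have h1 : ‖L x‖ ≤ ‖L‖ * ‖x‖ := L.le_opNorm x
    have h2 : ‖L x‖ = ‖b.repr x i‖ := by
      simp [L, Module.Basis.coord_apply]
    nlinarith [norm_nonneg (L x), norm_nonneg x, (ContinuousLinearMap.opNorm_nonneg L : (0:ℝ) ≤ ‖L‖)]
  choose k hk using hcoordbound
  -- the finitely generated module N
  set N : Submodule ℤ_[2] F :=
    Submodule.span ℤ_[2] (Set.range fun i => (((2:ℚ_[2]) ^ (k i))⁻¹) • b i) with hNdef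
  have hSN : ∀ s ∈ S, s ∈ N := by
    intro s hs
    have hrepr := b.sum_repr s
    rw [← hrepr]
    apply Submodule.sum_mem
    intro i _
    have hnorm2 : ‖(2 : ℚ_[2])‖ = 2⁻¹ := by
      have := Padic.norm_p (p := 2)
      push_cast at this ⊢
      simpa using this
    have hbound : ‖(2:ℚ_[2]) ^ (k i) * b.repr s i‖ ≤ 1 := by
      rw [norm_mul, norm_pow, hnorm2]
      calc (2⁻¹:ℝ) ^ (k i) * ‖b.repr s i‖ ≤ 2⁻¹ ^ (k i) * 2 ^ (k i) := by
            apply mul_le_mul_of_nonneg_left (hk i s (hball s hs)) (by positivity)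
        _ = 1 := by rw [← mul_pow]; norm_num
    set c : ℤ_[2] := ⟨(2:ℚ_[2]) ^ (k i) * b.repr s i, hbound⟩ with hcdef
    have hsm : b.repr s i • b i = c • ((((2:ℚ_[2]) ^ (k i))⁻¹) • b i) := by
      rw [← algebraMap_smul ℚ_[2] c ((((2:ℚ_[2]) ^ (k i))⁻¹) • b i), smul_smul,
        PadicInt.algebraMap_apply]
      congr 1
      show b.repr s i = ((2:ℚ_[2]) ^ (k i) * b.repr s i) * ((2:ℚ_[2]) ^ (k i))⁻¹
      field_simp
    rw [hsm]
    exact Submodule.smul_mem N c (Submodule.subset_span ⟨i, rfl⟩)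
  -- N is noetherian, so S is a finitely generated module, hence t is integral
  have hNfg : N.FG := Submodule.fg_span (Set.finite_range _)
  haveI : IsNoetherian ℤ_[2] N := isNoetherian_of_fg_of_noetherian N hNfg
  have hle : Subalgebra.toSubmodule S ≤ N := fun s hs => hSN s hs
  have hfg : (Subalgebra.toSubmodule S).FG := by
    have h1 : (Submodule.comap N.subtype (Subalgebra.toSubmodule S)).FG :=
      IsNoetherian.noetherian _
    have h2 := Submodule.map_comap_subtype N (Subalgebra.toSubmodule S)
    rw [inf_eq_right.mpr hle] at h2
    exact h2 ▸ h1.map N.subtype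
  exact IsIntegral.of_mem_of_fg S hfg t (Algebra.self_mem_adjoin_singleton ℤ_[2] t)

theorem exists_W_of_integral (F : Type) [Field F] [Algebra ℚ_[2] F]
    [Algebra ℤ_[2] F] [IsScalarTower ℤ_[2] ℚ_[2] F]
    (f : F →+* BF) (hf : ∀ x : ℤ_[2], f (algebraMap ℤ_[2] F x) = canonicalZ2toBF x)
    (x : F) (hx : IsIntegral ℤ_[2] x) : ∃ a : W, algebraMap W BF a = f x := by
  have hcomp : f.comp (algebraMap ℤ_[2] F) = (algebraMap W BF).comp phi :=
    RingHom.ext hf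
  have hint : IsIntegral W (f x) := by
    obtain ⟨p, pmonic, hp⟩ := hx
    refine ⟨p.map phi, pmonic.map phi, ?_⟩
    rw [Polynomial.eval₂_map]
    have h2 := Polynomial.hom_eval₂ p (algebraMap ℤ_[2] F) f x
    rw [hp, map_zero] at h2
    rw [← hcomp]
    exact h2.symm
  obtain ⟨a, ha⟩ := IsIntegrallyClosed.isIntegral_iff.mp hint
  exact ⟨a, ha⟩

end Unram

open Unram in
/-- Let `F` be a finite field extension of `ℚ₂` admitting a `ℚ₂`-algebra homomorphism
into `B(𝔽)`.  Then `F` is unramified over `ℚ₂`: `2` generates the maximal ideal of the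
integral closure `O_F` of `ℤ₂` in `F`, i.e. the ramification index of `O_F` over `ℤ₂`
equals `1`. -/
theorem unramified_of_embeds_in_BF (F : Type) [Field F] [Algebra ℚ_[2] F]
    [FiniteDimensional ℚ_[2] F]
    [Algebra ℤ_[2] F] [IsScalarTower ℤ_[2] ℚ_[2] F]
    (f : F →+* BF)
    (hf : ∀ x : ℤ_[2], f (algebraMap ℤ_[2] F x) = canonicalZ2toBF x) :
    ∀ I : Ideal (integralClosure ℤ_[2] F), I.IsMaximal →
      I = Ideal.span {(2 : integralClosure ℤ_[2] F)} := by
  intro I hI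
  haveI : CharZero F := charZero_of_injective_algebraMap (algebraMap ℚ_[2] F).injective
  have h2F : (2 : F) ≠ 0 := two_ne_zero
  have halg : Function.Injective (algebraMap (integralClosure ℤ_[2] F) F) :=
    Subtype.val_injective
  have hW : ∀ r : integralClosure ℤ_[2] F, ∃ a : WittVector 2 Fbar,
      algebraMap (WittVector 2 Fbar) BF a = f (r : F) :=
    fun r => exists_W_of_integral F f hf (r : F) r.2
  have h2notunitZ : ¬ IsUnit (2 : ℤ_[2]) := by
    have hp := PadicInt.prime_p (p := 2)
    rw [show ((2:ℕ) : ℤ_[2]) = (2 : ℤ_[2]) by norm_num] at hp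
    exact hp.not_unit
  -- 2 is not a unit in the integral closure
  have hnu : ¬ IsUnit (2 : integralClosure ℤ_[2] F) := by
    intro h
    obtain ⟨u, hu⟩ := h
    have hmul : ((u⁻¹ : (integralClosure ℤ_[2] F)ˣ) : F) * (2 : F) = 1 := by
      have h1 : ((u⁻¹ : (integralClosure ℤ_[2] F)ˣ) : integralClosure ℤ_[2] F) * (u : _) = 1 :=
        u.inv_mul
    -- map to F
      have := congrArg (algebraMap (integralClosure ℤ_[2] F) F) h1
      rw [map_mul, map_one, hu] at this
      rw [show (algebraMap (integralClosure ℤ_[2] F) F (2 : integralClosure ℤ_[2] F)) = (2:F) from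
        map_ofNat _ 2] at this
      exact this
    have hinv : ((u⁻¹ : (integralClosure ℤ_[2] F)ˣ) : F) = (2 : F)⁻¹ :=
      eq_inv_of_mul_eq_one_left hmul
    have hintF : IsIntegral ℤ_[2] ((2 : F)⁻¹) := hinv ▸
      ((u⁻¹ : (integralClosure ℤ_[2] F)ˣ) : integralClosure ℤ_[2] F).2
    have h2alg : (2 : F)⁻¹ = algebraMap ℚ_[2] F ((2 : ℚ_[2])⁻¹) := by
      rw [map_inv₀, map_ofNat]
    rw [h2alg] at hintF
    have hintQ : IsIntegral ℤ_[2] ((2 : ℚ_[2])⁻¹) :=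
      (isIntegral_algebraMap_iff (algebraMap ℚ_[2] F).injective).mp hintF
    obtain ⟨y, hy⟩ := IsIntegrallyClosed.isIntegral_iff.mp hintQ
    have : (2 : ℤ_[2]) * y = 1 := by
      have : algebraMap ℤ_[2] ℚ_[2] ((2 : ℤ_[2]) * y) = algebraMap ℤ_[2] ℚ_[2] 1 := by
        rw [map_mul, map_one, hy, map_ofNat]
        norm_num
      exact IsFractionRing.injective ℤ_[2] ℚ_[2] this
    exact h2notunitZ (IsUnit.of_mul_eq_one _ this)
  have h2R0 : (2 : integralClosure ℤ_[2] F) ≠ 0 := by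
    intro h
    have := congrArg (algebraMap (integralClosure ℤ_[2] F) F) h
    rw [map_ofNat, map_zero] at this
    exact h2F this
  have h2W : algebraMap (WittVector 2 Fbar) BF (2 : WittVector 2 Fbar) = f (2 : F) := by
    rw [map_ofNat, map_ofNat]
  -- dividing by 2 in the integral closure
  have hstep : ∀ (x : integralClosure ℤ_[2] F) (gx : WittVector 2 Fbar),
      algebraMap (WittVector 2 Fbar) BF gx = f (x : F) → (2 : WittVector 2 Fbar) ∣ gx →
      (2 : integralClosure ℤ_[2] F) ∣ x := by
    rintro x gx hgx ⟨d, hd⟩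
    have h2BF : algebraMap (WittVector 2 Fbar) BF (2 : WittVector 2 Fbar) ≠ 0 := by
      rw [map_ne_zero_iff _ (IsFractionRing.injective (WittVector 2 Fbar) BF)]
      exact two_ne_zero_W
    have htd : f ((2 : F)⁻¹ * (x : F)) = algebraMap (WittVector 2 Fbar) BF d := by
      rw [map_mul, map_inv₀, ← hgx, hd, map_mul, map_ofNat f 2, map_ofNat]
      rw [map_ofNat] at h2BF
      exact inv_mul_cancel_left₀ h2BF _
    have hint := integral_of_image_in_W F f hf _ d htd
    refine ⟨⟨(2 : F)⁻¹ * (x : F), hint⟩, ?_⟩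
    apply halg
    rw [map_mul]
    rw [show (algebraMap (integralClosure ℤ_[2] F) F (2 : integralClosure ℤ_[2] F)) = (2:F) from
      map_ofNat _ 2]
    show (x : F) = 2 * ((2 : F)⁻¹ * (x : F))
    field_simp
  -- 2 is prime in the integral closure
  have hPrime : Prime (2 : integralClosure ℤ_[2] F) := by
    refine ⟨h2R0, hnu, ?_⟩
    intro x y ⟨z, hz⟩
    obtain ⟨gx, hgx⟩ := hW x
    obtain ⟨gy, hgy⟩ := hW y
    obtain ⟨gz, hgz⟩ := hW z
    have hWrel : gx * gy = 2 * gz := by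
      apply IsFractionRing.injective (WittVector 2 Fbar) BF
      rw [map_mul, map_mul, hgx, hgy, hgz, h2W, ← map_mul, ← map_mul]
      congr 1
      have := congrArg (algebraMap (integralClosure ℤ_[2] F) F) hz
      rw [map_mul, map_mul] at this
      rw [show (algebraMap (integralClosure ℤ_[2] F) F (2 : integralClosure ℤ_[2] F)) = (2:F) from
        map_ofNat _ 2] at this
      exact this
    rcases prime2W.2.2 gx gy ⟨gz, hWrel⟩ with h | h
    · exact Or.inl (hstep x gx hgx h)
    · exact Or.inr (hstep y gy hgy h)
  -- span {2} is a maximal ideal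
  haveI : Algebra.IsIntegral ℤ_[2] (integralClosure ℤ_[2] F) :=
    ⟨fun x => integralClosure.isIntegral x⟩
  haveI hspan_prime : (Ideal.span {(2 : integralClosure ℤ_[2] F)}).IsPrime :=
    (Ideal.span_singleton_prime h2R0).mpr hPrime
  have hcomap : (Ideal.span {(2 : integralClosure ℤ_[2] F)}).comap
      (algebraMap ℤ_[2] (integralClosure ℤ_[2] F)) = IsLocalRing.maximalIdeal ℤ_[2] := by
    apply le_antisymm
    · apply IsLocalRing.le_maximalIdeal
      intro htop
      apply hspan_prime.ne_top
      rw [Ideal.eq_top_iff_one]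
      have h1 : (1 : ℤ_[2]) ∈ Ideal.comap (algebraMap ℤ_[2] (integralClosure ℤ_[2] F))
          (Ideal.span {(2 : integralClosure ℤ_[2] F)}) := htop ▸ Submodule.mem_top
      simpa using h1
    · rw [PadicInt.maximalIdeal_eq_span_p, Ideal.span_le, Set.singleton_subset_iff,
        SetLike.mem_coe, Ideal.mem_comap, map_natCast,
        show ((2:ℕ) : integralClosure ℤ_[2] F) = (2 : integralClosure ℤ_[2] F) by norm_num]
      exact Ideal.mem_span_singleton_self _
  have hmax : (Ideal.span {(2 : integralClosure ℤ_[2] F)}).IsMaximal := by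
    refine Ideal.isMaximal_of_isIntegral_of_isMaximal_comap (R := ℤ_[2]) _ ?_
    rw [hcomap]
    exact IsLocalRing.maximalIdeal.isMaximal ℤ_[2]
  -- every maximal ideal contains 2
  have hcomapI : I.comap (algebraMap ℤ_[2] (integralClosure ℤ_[2] F)) =
      IsLocalRing.maximalIdeal ℤ_[2] := by
    have := Ideal.isMaximal_comap_of_isIntegral_of_isMaximal (R := ℤ_[2]) I
    exact IsLocalRing.eq_maximalIdeal this
  have h2I : (2 : integralClosure ℤ_[2] F) ∈ I := by
    have h2m : ((2:ℕ) : ℤ_[2]) ∈ IsLocalRing.maximalIdeal ℤ_[2] := by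
      rw [PadicInt.maximalIdeal_eq_span_p]
      exact Ideal.mem_span_singleton_self _
    rw [← hcomapI] at h2m
    have := h2m
    rw [Ideal.mem_comap, map_natCast] at this
    rwa [show ((2:ℕ) : integralClosure ℤ_[2] F) = (2 : integralClosure ℤ_[2] F) by norm_num]
      at this
  have hle : Ideal.span {(2 : integralClosure ℤ_[2] F)} ≤ I := by
    rw [Ideal.span_le]
    intro v hv
    rw [Set.mem_singleton_iff] at hv
    subst hv
    exact h2I
  exact (hmax.eq_of_le hI.ne_top hle).symm
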